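/- arXiv:2003.02829 — 3 statements merged into one kernel-verified Lean document; each statement's English description precedes it below -/
import Mathlib

section
/- Let W ∈ ℝ^{n×n}, E₁ ∈ ℝ^{n×k}, H₁ ∈ ℝ^{k×k}, ε ∈ ℝ, and suppose all column sums of H₁ are equal to a common value σ. Let c₁, c₂ ∈ ℝ and set H₂ = H₁ + c₁·J_{k×k} and E₂ = E₁ + c₂·J_{n×k} (adding a constant to every entry). Define the LinBP iterates B_a^{(0)} = E_a and B_a^{(r+1)} = E_a + ε·W·B_a^{(r)}·H_a for a ∈ {1,2}. Then for every iteration r ≥ 0 the difference matrix B₂^{(r)} − B₁^{(r)} has constant rows: for every node i and all classes j, j', (B₂^{(r)} − B₁^{(r)})_{ij} = (B₂^{(r)} − B₁^{(r)})_{ij'}. -/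
open Matrix Finset

lemma stmt_2_aux {k : ℕ} (H₁ H₂ : Matrix (Fin k) (Fin k) ℝ) (σ c₁ : ℝ)
    (hσ : ∀ j, ∑ i, H₁ i j = σ)
    (hH₂ : H₂ = H₁ + c₁ • (Matrix.of fun _ _ => (1 : ℝ) : Matrix (Fin k) (Fin k) ℝ))
    (u v : Fin k → ℝ) (d : ℝ) (hd : ∀ b, u b = v b + d) (j : Fin k) :
    ∑ b, u b * H₂ b j - ∑ b, v b * H₁ b j
      = c₁ * ∑ b, v b + d * σ + d * c₁ * k := by
  have hs : ∑ b, H₁ b j = σ := hσ j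
  calc ∑ b, u b * H₂ b j - ∑ b, v b * H₁ b j
      = ∑ b, ((v b + d) * (H₁ b j + c₁) - v b * H₁ b j) := by
        rw [Finset.sum_sub_distrib]
        congr 1
        refine Finset.sum_congr rfl fun b _ => ?_
        rw [← hd b, hH₂]; simp
    _ = ∑ b, (v b * c₁ + d * H₁ b j + d * c₁) := by
        refine Finset.sum_congr rfl fun b _ => ?_; ring
    _ = c₁ * ∑ b, v b + d * σ + d * c₁ * k := by
        rw [Finset.sum_add_distrib, Finset.sum_add_distrib,
          ← Finset.sum_mul, ← Finset.mul_sum, hs, Finset.sum_const,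
          Finset.card_univ, Fintype.card_fin, nsmul_eq_mul]
        ring

/-- **Centering in LinBP is unnecessary (core invariant).** If `H₂ = H₁ + c₁ J` and
`E₂ = E₁ + c₂ J`, where `J` is the all-ones matrix, and all column sums of `H₁`
are equal, then at every iteration `r` of LinBP the difference `B₂ r - B₁ r`
has constant rows. -/
theorem stmt_2 {n k : ℕ}
    (W : Matrix (Fin n) (Fin n) ℝ)
    (E₁ E₂ : Matrix (Fin n) (Fin k) ℝ)
    (H₁ H₂ : Matrix (Fin k) (Fin k) ℝ)
    (ε : ℝ) (σ : ℝ)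
    (hσ : ∀ j, ∑ i, H₁ i j = σ)
    (c₁ c₂ : ℝ)
    (hH₂ : H₂ = H₁ + c₁ • (Matrix.of fun _ _ => (1 : ℝ) : Matrix (Fin k) (Fin k) ℝ))
    (hE₂ : E₂ = E₁ + c₂ • (Matrix.of fun _ _ => (1 : ℝ) : Matrix (Fin n) (Fin k) ℝ))
    (B₁ B₂ : ℕ → Matrix (Fin n) (Fin k) ℝ)
    (hB₁0 : B₁ 0 = E₁) (hB₂0 : B₂ 0 = E₂)
    (hB₁ : ∀ r, B₁ (r + 1) = E₁ + ε • (W * B₁ r * H₁))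
    (hB₂ : ∀ r, B₂ (r + 1) = E₂ + ε • (W * B₂ r * H₂)) :
    ∀ (r : ℕ) (i : Fin n) (j j' : Fin k),
      (B₂ r - B₁ r) i j = (B₂ r - B₁ r) i j' := by
  intro r
  induction r with
  | zero =>
    intro i j j'
    simp [hB₁0, hB₂0, hE₂]
  | succ r ih =>
    intro i j j'
    set d : ℝ := ∑ a, W i a * ((B₂ r - B₁ r) a j) with hddef
    have hd : ∀ b, (W * B₂ r) i b = (W * B₁ r) i b + d := by
      intro b
      rw [hddef]
      simp only [Matrix.mul_apply, Matrix.sub_apply, mul_sub,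
        Finset.sum_sub_distrib]
      have : ∑ a, W i a * B₂ r a j - ∑ a, W i a * B₁ r a j
          = ∑ a, W i a * B₂ r a b - ∑ a, W i a * B₁ r a b := by
        rw [← Finset.sum_sub_distrib, ← Finset.sum_sub_distrib]
        refine Finset.sum_congr rfl fun a _ => ?_
        rw [← mul_sub, ← mul_sub]
        congr 1
        have h := ih a j b
        simpa using h
      linarith
    have key : ∀ jj : Fin k,
        ∑ b, (W * B₂ r) i b * H₂ b jj - ∑ b, (W * B₁ r) i b * H₁ b jj
          = c₁ * ∑ b, (W * B₁ r) i b + d * σ + d * c₁ * k :=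
      fun jj => stmt_2_aux H₁ H₂ σ c₁ hσ hH₂ _ _ d hd jj
    have expand : ∀ jj : Fin k,
        (B₂ (r+1) - B₁ (r+1)) i jj
          = c₂ + ε * (∑ b, (W * B₂ r) i b * H₂ b jj
              - ∑ b, (W * B₁ r) i b * H₁ b jj) := by
      intro jj
      rw [hB₁ r, hB₂ r, hE₂]
      simp only [Matrix.sub_apply, Matrix.add_apply, Matrix.smul_apply,
        Matrix.of_apply, smul_eq_mul, mul_one]
      have h2 : (W * B₂ r * H₂) i jj = ∑ b, (W * B₂ r) i b * H₂ b jj := by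
        rw [Matrix.mul_apply]
      have h1 : (W * B₁ r * H₁) i jj = ∑ b, (W * B₁ r) i b * H₁ b jj := by
        rw [Matrix.mul_apply]
      rw [h1, h2]; ring
    rw [expand j, expand j', key j, key j']
end

section
/- Let W ∈ ℝ^{n×n}, E₁ ∈ ℝ^{n×k}, H₁ ∈ ℝ^{k×k}, ε ∈ ℝ, and suppose all column sums of H₁ are equal to a common value σ. Let c₁, c₂ ∈ ℝ and set H₂ = H₁ + c₁·J_{k×k} and E₂ = E₁ + c₂·J_{n×k}. Define the LinBP iterates B_a^{(0)} = E_a and B_a^{(r+1)} = E_a + ε·W·B_a^{(r)}·H_a for a ∈ {1,2}. Then for every r ≥ 0, every node i, and all classes j, j', one has B₂^{(r)}_{ij} ≥ B₂^{(r)}_{ij'} if and only if B₁^{(r)}_{ij} ≥ B₁^{(r)}_{ij'}; in particular, assigning each node the class of maximal belief yields identical labels for the two runs. -/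
open Matrix Finset

/-- **Centering in LinBP is unnecessary.** If `H₂ = H₁ + c₁ J` and `E₂ = E₁ + c₂ J`,
where `J` is the all-ones matrix, and all column sums of `H₁` are equal, then at
every iteration `r` of LinBP the relative order of beliefs within each row is
identical for the two runs; in particular the max-belief labeling is identical. -/
theorem stmt_3 {n k : ℕ}
    (W : Matrix (Fin n) (Fin n) ℝ)
    (E₁ E₂ : Matrix (Fin n) (Fin k) ℝ)
    (H₁ H₂ : Matrix (Fin k) (Fin k) ℝ)
    (ε : ℝ) (σ : ℝ)
    (hσ : ∀ j, ∑ i, H₁ i j = σ)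
    (c₁ c₂ : ℝ)
    (hH₂ : H₂ = H₁ + c₁ • (Matrix.of fun _ _ => (1 : ℝ) : Matrix (Fin k) (Fin k) ℝ))
    (hE₂ : E₂ = E₁ + c₂ • (Matrix.of fun _ _ => (1 : ℝ) : Matrix (Fin n) (Fin k) ℝ))
    (B₁ B₂ : ℕ → Matrix (Fin n) (Fin k) ℝ)
    (hB₁0 : B₁ 0 = E₁) (hB₂0 : B₂ 0 = E₂)
    (hB₁ : ∀ r, B₁ (r + 1) = E₁ + ε • (W * B₁ r * H₁))
    (hB₂ : ∀ r, B₂ (r + 1) = E₂ + ε • (W * B₂ r * H₂)) :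
    ∀ (r : ℕ) (i : Fin n) (j j' : Fin k),
      B₂ r i j ≥ B₂ r i j' ↔ B₁ r i j ≥ B₁ r i j' := by
  have expand : ∀ (B : Matrix (Fin n) (Fin k) ℝ) (H : Matrix (Fin k) (Fin k) ℝ)
      (i : Fin n) (j : Fin k),
      (W * B * H) i j = ∑ m, ∑ l, W i l * B l m * H m j := by
    intro B H i j
    simp [Matrix.mul_apply, Finset.sum_mul]
  have key : ∀ r, ∃ d : Fin n → ℝ, ∀ i j, B₂ r i j = B₁ r i j + d i := by
    intro r
    induction r with
    | zero =>
      refine ⟨fun _ => c₂, fun i j => ?_⟩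
      simp [hB₁0, hB₂0, hE₂]
    | succ r ih =>
      obtain ⟨d, hd⟩ := ih
      refine ⟨fun i => c₂ + ε * (c₁ * ∑ m, ∑ l, W i l * B₁ r l m
        + (σ + c₁ * k) * ∑ l, W i l * d l), fun i j => ?_⟩
      have h2 : (W * B₂ r * H₂) i j = (W * B₁ r * H₁) i j
          + (c₁ * ∑ m, ∑ l, W i l * B₁ r l m + (σ + c₁ * k) * ∑ l, W i l * d l) := by
        rw [expand, expand]
        have : ∀ m l, W i l * B₂ r l m * H₂ m j
            = W i l * B₁ r l m * H₁ m j + c₁ * (W i l * B₁ r l m)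
              + (W i l * d l * H₁ m j + c₁ * (W i l * d l)) := by
          intro m l
          rw [hd, hH₂]
          simp only [Matrix.add_apply, Matrix.smul_apply, Matrix.of_apply, smul_eq_mul,
            mul_one]
          ring
        calc ∑ m, ∑ l, W i l * B₂ r l m * H₂ m j
            = ∑ m, ∑ l, (W i l * B₁ r l m * H₁ m j + c₁ * (W i l * B₁ r l m)
              + (W i l * d l * H₁ m j + c₁ * (W i l * d l))) := by
              refine Finset.sum_congr rfl fun m _ => Finset.sum_congr rfl fun l _ => this m l
          _ = (∑ m, ∑ l, W i l * B₁ r l m * H₁ m j)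
              + c₁ * (∑ m, ∑ l, W i l * B₁ r l m)
              + ((∑ m, H₁ m j) * ∑ l, W i l * d l + (k : ℝ) * (c₁ * ∑ l, W i l * d l)) := by
              simp only [Finset.sum_add_distrib, Finset.mul_sum, Finset.sum_mul]
              rw [Finset.sum_comm (f := fun m l => W i l * d l * H₁ m j)]
              simp [Finset.mul_sum, Finset.sum_mul, mul_comm, mul_left_comm]
          _ = _ := by rw [hσ j]; ring
      rw [hB₁, hB₂, hE₂]
      simp only [Matrix.add_apply, Matrix.smul_apply, Matrix.of_apply, smul_eq_mul, mul_one]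
      rw [h2]; ring
  intro r i j j'
  obtain ⟨d, hd⟩ := key r
  rw [hd, hd]
  exact ⟨fun h => le_of_add_le_add_right h, fun h => add_le_add_left h _⟩
end

section
/- Let k ≥ 1, L ≥ 1, let H, S, and Z₁, …, Z_L be symmetric k×k real matrices, and let w₁, …, w_L ∈ ℝ. Define f : ℝ → ℝ by f(t) = Σ_{ℓ=1}^{L} w_ℓ · ‖(H + t·S)^ℓ − Z_ℓ‖_F². Then f is differentiable at t = 0 with f'(0) = Σ_{ℓ=1}^{L} w_ℓ · trace(G_ℓ · S), where G_ℓ = 2ℓ·H^{2ℓ−1} − 2·Σ_{r=0}^{ℓ−1} H^r · Z_ℓ · H^{ℓ−1−r}. -/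
open Matrix Finset

noncomputable def Dmat {k : ℕ} (ℓ : ℕ) (Hm Sm : Matrix (Fin k) (Fin k) ℝ) :
    Matrix (Fin k) (Fin k) ℝ :=
  ∑ r ∈ Finset.range ℓ, Hm ^ r * Sm * Hm ^ (ℓ - 1 - r)

lemma Dmat_succ {k : ℕ} (H S : Matrix (Fin k) (Fin k) ℝ) (ℓ : ℕ) :
    Dmat (ℓ + 1) H S = Dmat ℓ H S * H + H ^ ℓ * S := by
  unfold Dmat
  rw [Finset.sum_range_succ]
  simp only [Nat.add_sub_cancel, Nat.sub_self, pow_zero, mul_one]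
  rw [Finset.sum_mul]
  congr 1
  apply Finset.sum_congr rfl
  intro r hr
  rw [Finset.mem_range] at hr
  have h : ℓ - r = (ℓ - 1 - r) + 1 := by omega
  rw [h, pow_succ, ← mul_assoc]

lemma entry_hasDerivAt {k : ℕ} (H S : Matrix (Fin k) (Fin k) ℝ) (ℓ : ℕ) (i j : Fin k) :
    HasDerivAt (fun t : ℝ => ((H + t • S) ^ ℓ) i j) ((Dmat ℓ H S) i j) 0 := by
  induction ℓ generalizing i j with
  | zero =>
    simp only [pow_zero, Dmat, Finset.range_zero, Finset.sum_empty, Matrix.zero_apply]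
    exact hasDerivAt_const _ _
  | succ ℓ ih =>
    have hA : ∀ m j : Fin k, HasDerivAt (fun t : ℝ => (H + t • S) m j) (S m j) 0 := by
      intro m j
      have : HasDerivAt (fun t : ℝ => H m j + t * S m j) (S m j) 0 := by
        simpa using ((hasDerivAt_id (0 : ℝ)).mul_const (S m j)).const_add (H m j)
      simpa [Matrix.add_apply, Matrix.smul_apply, smul_eq_mul] using this
    have key : (fun t : ℝ => ((H + t • S) ^ (ℓ + 1)) i j)
        = fun t : ℝ => ∑ m, ((H + t • S) ^ ℓ) i m * (H + t • S) m j := by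
      funext t; rw [pow_succ, Matrix.mul_apply]
    rw [key, Dmat_succ]
    have hsum := HasDerivAt.fun_sum (fun m (_ : m ∈ Finset.univ) => (ih i m).fun_mul (hA m j))
    refine hsum.congr_deriv ?_
    simp [Matrix.add_apply, Matrix.mul_apply, Finset.sum_add_distrib]

lemma trace_identity {k : ℕ} (H S : Matrix (Fin k) (Fin k) ℝ) {ℓ : ℕ} (hℓ : 1 ≤ ℓ)
    (Zm : Matrix (Fin k) (Fin k) ℝ) (hH : H.IsSymm) (hZ : Zm.IsSymm) :
    ∑ i, ∑ j, 2 * ((H ^ ℓ - Zm) i j) * ((Dmat ℓ H S) i j)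
      = Matrix.trace (((2 * ℓ : ℝ) • H ^ (2 * ℓ - 1) -
          (2 : ℝ) • ∑ r ∈ Finset.range ℓ, H ^ r * Zm * H ^ (ℓ - 1 - r)) * S) := by
  set M := H ^ ℓ - Zm with hM
  have hMsymm : M.IsSymm := (hH.pow ℓ).sub hZ
  have h1 : (∑ i, ∑ j, 2 * (M i j) * ((Dmat ℓ H S) i j))
      = 2 * Matrix.trace (M * Dmat ℓ H S) := by
    rw [Finset.sum_comm, Matrix.trace, Finset.mul_sum]
    apply Finset.sum_congr rfl; intro a _
    rw [Matrix.diag_apply, Matrix.mul_apply, Finset.mul_sum]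
    apply Finset.sum_congr rfl; intro b _
    rw [hMsymm.apply a b]; ring
  have h2 : 2 * Matrix.trace (M * Dmat ℓ H S)
      = Matrix.trace ((∑ r ∈ Finset.range ℓ, (2 : ℝ) • (H ^ (ℓ - 1 - r) * M * H ^ r)) * S) := by
    unfold Dmat
    rw [Finset.mul_sum, Matrix.trace_sum, Finset.sum_mul, Matrix.trace_sum, Finset.mul_sum]
    apply Finset.sum_congr rfl; intro r _
    rw [Matrix.smul_mul, Matrix.trace_smul, smul_eq_mul]
    congr 1
    have e : M * (H ^ r * S * H ^ (ℓ - 1 - r)) = (M * H ^ r * S) * H ^ (ℓ - 1 - r) := by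
      noncomm_ring
    rw [e, Matrix.trace_mul_comm]
    congr 1
    noncomm_ring
  have hGD : (2 * ℓ : ℝ) • H ^ (2 * ℓ - 1) -
        (2 : ℝ) • ∑ r ∈ Finset.range ℓ, H ^ r * Zm * H ^ (ℓ - 1 - r)
      = ∑ r ∈ Finset.range ℓ, (2 : ℝ) • (H ^ (ℓ - 1 - r) * M * H ^ r) := by
    have e1 : ∀ r ∈ Finset.range ℓ, (2 : ℝ) • (H ^ (ℓ - 1 - r) * M * H ^ r)
        = (2 : ℝ) • H ^ (2 * ℓ - 1) - (2 : ℝ) • (H ^ (ℓ - 1 - r) * Zm * H ^ r) := by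
      intro r hr; rw [Finset.mem_range] at hr
      have hp : H ^ (ℓ - 1 - r) * H ^ ℓ * H ^ r = H ^ (2 * ℓ - 1) := by
        rw [← pow_add, ← pow_add]; congr 1; omega
      rw [hM, Matrix.mul_sub, Matrix.sub_mul, smul_sub, hp]
    rw [Finset.sum_congr rfl e1, Finset.sum_sub_distrib, Finset.sum_const, Finset.card_range]
    congr 1
    · rw [← Nat.cast_smul_eq_nsmul ℝ ℓ ((2 : ℝ) • H ^ (2 * ℓ - 1)), smul_smul]
      congr 1
      ring
    · rw [← Finset.smul_sum]
      congr 1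
      have hrefl := Finset.sum_range_reflect
        (fun r => H ^ (ℓ - 1 - r) * Zm * H ^ r) ℓ
      rw [← hrefl]
      apply Finset.sum_congr rfl
      intro r hr; rw [Finset.mem_range] at hr
      have : ℓ - 1 - (ℓ - 1 - r) = r := by omega
      rw [this]
  rw [h1, h2, hGD]

/-- **Gradient of the DCE energy (matrix part).** For symmetric `H`, `S`, `Z ℓ`
and weights `w ℓ`, the function
`f t = Σ_{ℓ=1}^{L} w ℓ · ‖(H + t·S)^ℓ − Z ℓ‖_F²`
is differentiable at `t = 0` with derivative
`Σ_{ℓ=1}^{L} w ℓ · trace (G ℓ · S)` where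
`G ℓ = 2ℓ·H^(2ℓ−1) − 2·Σ_{r=0}^{ℓ−1} H^r · Z ℓ · H^(ℓ−1−r)`. -/
theorem stmt_10 {k : ℕ} (hk : 1 ≤ k) (L : ℕ) (hL : 1 ≤ L)
    (H S : Matrix (Fin k) (Fin k) ℝ)
    (Z : ℕ → Matrix (Fin k) (Fin k) ℝ)
    (w : ℕ → ℝ)
    (hH : H.IsSymm) (hS : S.IsSymm) (hZ : ∀ ℓ, (Z ℓ).IsSymm)
    (f : ℝ → ℝ)
    (hf : ∀ t, f t = ∑ ℓ ∈ Finset.Icc 1 L,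
      w ℓ * ∑ i, ∑ j, (((H + t • S) ^ ℓ - Z ℓ) i j) ^ 2)
    (G : ℕ → Matrix (Fin k) (Fin k) ℝ)
    (hG : ∀ ℓ, G ℓ = (2 * ℓ : ℝ) • H ^ (2 * ℓ - 1) -
      (2 : ℝ) • ∑ r ∈ Finset.range ℓ, H ^ r * Z ℓ * H ^ (ℓ - 1 - r)) :
    HasDerivAt f (∑ ℓ ∈ Finset.Icc 1 L, w ℓ * Matrix.trace (G ℓ * S)) 0 := by
  have hfun : f = fun t => ∑ ℓ ∈ Finset.Icc 1 L,
      w ℓ * ∑ i, ∑ j, (((H + t • S) ^ ℓ - Z ℓ) i j) ^ 2 := funext hf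
  rw [hfun]
  have main : HasDerivAt (fun t : ℝ => ∑ ℓ ∈ Finset.Icc 1 L,
      w ℓ * ∑ i, ∑ j, (((H + t • S) ^ ℓ - Z ℓ) i j) ^ 2)
      (∑ ℓ ∈ Finset.Icc 1 L,
        w ℓ * ∑ i, ∑ j, 2 * ((H ^ ℓ - Z ℓ) i j) * ((Dmat ℓ H S) i j)) 0 := by
    apply HasDerivAt.fun_sum
    intro ℓ _
    apply HasDerivAt.const_mul
    apply HasDerivAt.fun_sum
    intro i _
    apply HasDerivAt.fun_sum
    intro j _
    have h := ((entry_hasDerivAt H S ℓ i j).sub_const ((Z ℓ) i j)).fun_pow 2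
    simp only [Matrix.sub_apply]
    refine h.congr_deriv ?_
    simp
  have heq : (∑ ℓ ∈ Finset.Icc 1 L,
      w ℓ * ∑ i, ∑ j, 2 * ((H ^ ℓ - Z ℓ) i j) * ((Dmat ℓ H S) i j))
      = ∑ ℓ ∈ Finset.Icc 1 L, w ℓ * Matrix.trace (G ℓ * S) := by
    apply Finset.sum_congr rfl
    intro ℓ hℓ
    rw [Finset.mem_Icc] at hℓ
    rw [hG ℓ]
    congr 1
    exact trace_identity H S hℓ.1 (Z ℓ) hH (hZ ℓ)
  rw [← heq]
  exact main
end
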